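/- arXiv:2211.16573 — 8 statements merged into one kernel-verified Lean document; each statement's English description precedes it below -/
import Mathlib

section
/- Let A be an associative algebra over a field F such that A has countable dimension over F, let S be a simple A-module, and suppose F is uncountable. Then every element of the endomorphism ring End_A(S) is algebraic over F. -/
open Polynomial in
/-- In a division algebra over `F`, if `x` is transcendental over `F`, then the family
`{(x - a)⁻¹ | a : F}` is linearly independent over `F`. -/
theorem aux_linearIndependent_sub_inv
    {F D : Type*} [Field F] [DivisionRing D] [Algebra F D] {x : D}
    (H : Transcendental F x) :
    LinearIndependent F fun a ↦ (x - algebraMap F D a)⁻¹ := by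
  classical
  rw [transcendental_iff] at H
  refine linearIndependent_iff'.2 fun s m hm i hi ↦ ?_
  have hnz (a : F) : x - algebraMap F D a ≠ 0 := fun h ↦
    X_sub_C_ne_zero a <| H (X - C a) (by simp [h])
  let b : D := aeval x (s.prod fun j ↦ (X : F[X]) - C j)
  have h1 : ∀ i ∈ s, m i • (b * (x - algebraMap F D i)⁻¹) =
      m i • aeval x ((s.erase i).prod fun j ↦ (X : F[X]) - C j) := fun i hi ↦ by
    have hb : b = aeval x ((s.erase i).prod fun j ↦ (X : F[X]) - C j) *
        (x - algebraMap F D i) := by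
      rw [show b = aeval x (((s.erase i).prod fun j ↦ (X : F[X]) - C j) * (X - C i)) from by
        rw [s.prod_erase_mul _ hi], map_mul]
      simp
    rw [hb, mul_inv_cancel_right₀ (hnz i)]
  replace hm := congr(b * $(hm))
  simp_rw [mul_zero, Finset.mul_sum, mul_smul_comm, Finset.sum_congr rfl h1] at hm
  let p : Polynomial F := s.sum fun i ↦ .C (m i) * (s.erase i).prod fun j ↦ .X - .C j
  replace hm := congr(Polynomial.aeval i $(H p (by
    simp_rw [← hm, p, map_sum, map_mul, aeval_C, Algebra.smul_def])))
  have h2 : ∀ j ∈ s.erase i, m j * ((s.erase j).prod fun x ↦ i - x) = 0 := fun j hj ↦ by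
    have := Finset.mem_erase_of_ne_of_mem (Finset.ne_of_mem_erase hj).symm hi
    simp_rw [← (s.erase j).prod_erase_mul _ this, sub_self, mul_zero]
  simp_rw [map_zero, p, map_sum, map_mul, map_prod, map_sub, aeval_X,
    aeval_C, Algebra.algebraMap_self_apply, ← s.sum_erase_add _ hi,
    Finset.sum_eq_zero h2, zero_add] at hm
  exact eq_zero_of_ne_zero_of_mul_right_eq_zero (Finset.prod_ne_zero_iff.2 fun j hj ↦
    sub_ne_zero.2 (Finset.ne_of_mem_erase hj).symm) hm

/-- If `F` is an uncountable field, `A` an associative unital `F`-algebra of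
countable dimension over `F`, and `S` a simple left `A`-module, then every element of
`End_A(S)` is algebraic over `F`. -/
theorem stmt_0 (F : Type*) [Field F] [Uncountable F]
    (A : Type*) [Ring A] [Algebra F A]
    (hdim : Module.rank F A ≤ Cardinal.aleph0)
    (S : Type*) [AddCommGroup S] [Module A S] [Module F S] [IsScalarTower F A S]
    [IsSimpleModule A S]
    (θ : Module.End A S) : IsAlgebraic F θ := by
  classical
  by_contra hθ
  have H : Transcendental F θ := hθ
  have li := aux_linearIndependent_sub_inv H
  -- a nonzero element of S
  have : Nontrivial S := IsSimpleModule.nontrivial A S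
  obtain ⟨s₀, hs₀⟩ := exists_ne (0 : S)
  -- evaluation at s₀ is an injective F-linear map End A S → S
  have hSMul : ∀ (c : F) (d : Module.End A S) (y : S), (c • d) y = c • d y := fun _ _ _ ↦ rfl
  let ev : Module.End A S →ₗ[F] S :=
    { toFun := fun d ↦ d s₀
      map_add' := fun _ _ ↦ rfl
      map_smul' := fun c d ↦ rfl }
  have hev : Function.Injective ev := by
    intro d e h
    by_contra hde
    have hne : d - e ≠ 0 := sub_ne_zero.2 hde
    have hinj := LinearMap.injective_of_ne_zero hne
    apply hs₀
    apply hinj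
    show (d - e) s₀ = (d - e) 0
    simp only [LinearMap.sub_apply, map_zero]
    rw [show d s₀ = e s₀ from h, sub_self]
  -- a • s₀ : A → S is surjective and F-linear
  let f : A →ₗ[F] S :=
    { toFun := fun a ↦ a • s₀
      map_add' := fun a b ↦ add_smul a b s₀
      map_smul' := fun c a ↦ smul_assoc c a s₀ }
  have hf : Function.Surjective f := by
    have : LinearMap.range (LinearMap.toSpanSingleton A S s₀) = ⊤ := by
      rcases eq_bot_or_eq_top (LinearMap.range (LinearMap.toSpanSingleton A S s₀)) with h | h
      · exfalso
        apply hs₀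
        have : (1 : A) • s₀ ∈ LinearMap.range (LinearMap.toSpanSingleton A S s₀) :=
          ⟨1, rfl⟩
        rw [h] at this
        simpa using this
      · exact h
    intro y
    obtain ⟨a, ha⟩ := (LinearMap.range_eq_top.1 this) y
    exact ⟨a, ha⟩
  -- cardinality chain
  have h1 := li.cardinal_lift_le_rank
  have h2 : Module.rank F (Module.End A S) ≤ Module.rank F S :=
    LinearMap.rank_le_of_injective ev hev
  have h3 := f.lift_rank_le_of_surjective hf
  have hS : Module.rank F S ≤ Cardinal.aleph0 :=
    Cardinal.lift_le_aleph0.1 (h3.trans (Cardinal.lift_aleph0.le.trans' (Cardinal.lift_le.2 hdim)))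
  have hE : Module.rank F (Module.End A S) ≤ Cardinal.aleph0 := h2.trans hS
  have hF : Cardinal.mk F ≤ Cardinal.aleph0 :=
    Cardinal.lift_le_aleph0.1 (h1.trans (Cardinal.lift_aleph0.le.trans' (Cardinal.lift_le.2 hE)))
  exact absurd (Cardinal.mk_le_aleph0_iff.1 hF) (not_countable)
end

section
/- Let θ be an endomorphism of a nonzero simple module S over an F-algebra A. If θ is not algebraic over F, then the elements (θ − λ)⁻¹ for λ ∈ F are F-linearly independent in End_A(S), and hence dim_F(S) ≥ card(F). -/
open Polynomial

/-- If `θ` is an endomorphism of a nonzero simple `A`-module `S` which is not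
algebraic over `F`, then the elements `(θ - λ)⁻¹` for `λ ∈ F` are `F`-linearly independent
in `End_A(S)`, and hence `dim_F S ≥ card F`. -/
theorem stmt_1 (F : Type u_1) [Field F]
    (A : Type u_2) [Ring A] [Algebra F A]
    (S : Type u_3) [AddCommGroup S] [Nontrivial S] [Module A S] [Module F S]
    [IsScalarTower F A S] [IsSimpleModule A S]
    (θ : Module.End A S) (hθ : ¬ IsAlgebraic F θ) :
    LinearIndependent F
        (fun lam : F => Ring.inverse (θ - algebraMap F (Module.End A S) lam)) ∧
      Cardinal.lift.{u_3} (Cardinal.mk F) ≤ Cardinal.lift.{u_1} (Module.rank F S) := by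
  have htr : Transcendental F θ := hθ
  have haez : ∀ p : F[X], Polynomial.aeval θ p = 0 → p = 0 := transcendental_iff.mp htr
  -- each θ - λ is nonzero, hence bijective by Schur, hence a unit
  have hne : ∀ lam : F, θ - algebraMap F (Module.End A S) lam ≠ 0 := by
    intro lam h
    apply hθ
    refine ⟨X - C lam, ?_, ?_⟩
    · exact X_sub_C_ne_zero lam
    · simpa [Polynomial.aeval_X, Polynomial.aeval_C, sub_eq_zero] using h
  have hunit : ∀ lam : F, IsUnit (θ - algebraMap F (Module.End A S) lam) := by
    intro lam
    rw [Module.End.isUnit_iff]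
    exact (LinearMap.bijective_or_eq_zero _).resolve_right (hne lam)
  have hmul : ∀ lam : F,
      (θ - algebraMap F (Module.End A S) lam) *
        Ring.inverse (θ - algebraMap F (Module.End A S) lam) = 1 :=
    fun lam => Ring.mul_inverse_cancel _ (hunit lam)
  have hli : LinearIndependent F
      (fun lam : F => Ring.inverse (θ - algebraMap F (Module.End A S) lam)) := by
    rw [linearIndependent_iff']
    intro s g hsum i hi
    classical
    -- multiply the relation by ∏_{j∈s} (θ - j)
    set p : F → F[X] := fun i => ∏ j ∈ s.erase i, (X - C j) with hp
    have key : ∀ i ∈ s,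
        (Polynomial.aeval θ (∏ j ∈ s, (X - C j))) *
          Ring.inverse (θ - algebraMap F (Module.End A S) i) = Polynomial.aeval θ (p i) := by
      intro i hi
      have : (∏ j ∈ s, (X - C j)) = p i * (X - C i) := by
        rw [hp, ← Finset.prod_erase_mul s _ hi]
      rw [this, map_mul]
      have : (Polynomial.aeval θ) (X - C i) = θ - algebraMap F (Module.End A S) i := by
        simp [Polynomial.aeval_C, Algebra.algebraMap_eq_smul_one]
      rw [this, mul_assoc, hmul i, mul_one]
    have h0 : Polynomial.aeval θ (∑ i ∈ s, g i • p i) = 0 := by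
      rw [map_sum]
      have : ∀ i ∈ s, Polynomial.aeval θ (g i • p i) =
          (Polynomial.aeval θ (∏ j ∈ s, (X - C j))) *
            (g i • Ring.inverse (θ - algebraMap F (Module.End A S) i)) := by
        intro i hi
        rw [map_smul, mul_smul_comm, key i hi]
      rw [Finset.sum_congr rfl this, ← Finset.mul_sum, hsum, mul_zero]
    have hpoly : (∑ i ∈ s, g i • p i) = 0 := haez _ h0
    -- evaluate at i
    have heval := congrArg (Polynomial.eval i) hpoly
    rw [Polynomial.eval_finset_sum] at heval
    simp only [Polynomial.eval_smul, smul_eq_mul, Polynomial.eval_zero] at heval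
    have hterm : ∀ j ∈ s, j ≠ i → g j * (p j).eval i = 0 := by
      intro j hj hji
      have : (p j).eval i = 0 := by
        rw [hp, Polynomial.eval_prod]
        refine Finset.prod_eq_zero (Finset.mem_erase.mpr ⟨hji.symm, hi⟩) ?_
        simp
      rw [this, mul_zero]
    rw [Finset.sum_eq_single_of_mem i hi (fun j hj hji => hterm j hj hji)] at heval
    have hpne : (p i).eval i ≠ 0 := by
      rw [hp, Polynomial.eval_prod]
      refine Finset.prod_ne_zero_iff.mpr ?_
      intro j hj
      have : j ≠ i := (Finset.mem_erase.mp hj).1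
      simp [sub_eq_zero, this.symm]
    exact (mul_eq_zero.mp heval).resolve_right hpne
  refine ⟨hli, ?_⟩
  -- map into S via evaluation at a nonzero element
  obtain ⟨s0, hs0⟩ := exists_ne (0 : S)
  let φ : Module.End A S →ₗ[F] S :=
    { toFun := fun f => f s0
      map_add' := fun f g => rfl
      map_smul' := fun c f => rfl }
  have hφ : Function.Injective φ := by
    rw [injective_iff_map_eq_zero]
    intro f hf
    by_contra hfne
    have hbij := (LinearMap.bijective_or_eq_zero f).resolve_right hfne
    exact hs0 (hbij.injective (by rw [map_zero]; exact hf))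
  have hli2 : LinearIndependent F
      (fun lam : F => φ (Ring.inverse (θ - algebraMap F (Module.End A S) lam))) :=
    hli.map' φ (LinearMap.ker_eq_bot.mpr hφ)
  exact hli2.cardinal_lift_le_rank
end

section
/- Let D be a division ring with center K containing a maximal subfield E. If dim_K(E) is finite, then dim_E(D) is finite and dim_K(D) is finite. -/
namespace Stmt10
variable {K : Type*} [Field K] {D : Type*} [DivisionRing D] [Algebra K D]

/-- Operators of the form `x ↦ ∑ eᵢ * x * dᵢ` with `eᵢ ∈ E`. -/
def IsOp (E : Subalgebra K D) (f : D → D) : Prop :=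
  f ∈ AddSubmonoid.closure {g : D → D | ∃ e ∈ E, ∃ d : D, g = fun x => e * x * d}

variable {E : Subalgebra K D}

theorem isOp_single {e : D} (he : e ∈ E) (d : D) : IsOp E (fun x => e * x * d) :=
  AddSubmonoid.subset_closure ⟨e, he, d, rfl⟩

theorem isOp_zero : IsOp E (0 : D → D) := zero_mem _

theorem isOp_add {f g : D → D} (hf : IsOp E f) (hg : IsOp E g) : IsOp E (f + g) := add_mem hf hg

theorem isOp_sum {ι : Type*} (s : Finset ι) (f : ι → (D → D)) (h : ∀ i ∈ s, IsOp E (f i)) :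
    IsOp E (∑ i ∈ s, f i) := sum_mem h

theorem isOp_id : IsOp E (fun x : D => x) := by
  simpa using isOp_single (E := E) E.one_mem 1

theorem isOp_outer {f : D → D} (hf : IsOp E f) {e : D} (he : e ∈ E) (d : D) :
    IsOp E (fun x => e * f x * d) := by
  induction hf using AddSubmonoid.closure_induction with
  | mem g hg =>
    obtain ⟨e', he', d', rfl⟩ := hg
    have : (fun x => e * (e' * x * d') * d) = fun x => (e * e') * x * (d' * d) := by
      funext x; noncomm_ring
    rw [this]
    exact isOp_single (E.mul_mem he he') _
  | zero => simp only [Pi.zero_apply, mul_zero, zero_mul]; exact isOp_zero (E := E)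
  | add f₁ f₂ h₁ h₂ ih₁ ih₂ =>
    have : (fun x => e * (f₁ + f₂) x * d) = (fun x => e * f₁ x * d) + fun x => e * f₂ x * d := by
      funext x; simp [mul_add, add_mul]
    rw [this]; exact isOp_add ih₁ ih₂

theorem isOp_neg {f : D → D} (hf : IsOp E f) : IsOp E (-f) := by
  have := isOp_outer hf E.one_mem (-1)
  have h2 : (fun x => 1 * f x * (-1)) = -f := by funext x; simp
  rwa [h2] at this

theorem isOp_comp {f g : D → D} (hf : IsOp E f) (hg : IsOp E g) : IsOp E (f ∘ g) := by
  induction hf using AddSubmonoid.closure_induction with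
  | mem f' hf' =>
    obtain ⟨e, he, d, rfl⟩ := hf'
    exact isOp_outer hg he d
  | zero => exact isOp_zero
  | add f₁ f₂ h₁ h₂ ih₁ ih₂ => exact isOp_add ih₁ ih₂

theorem isOp_map_add {f : D → D} (hf : IsOp E f) (x y : D) : f (x + y) = f x + f y := by
  induction hf using AddSubmonoid.closure_induction with
  | mem g hg => obtain ⟨e, he, d, rfl⟩ := hg; simp [mul_add, add_mul]
  | zero => simp
  | add f₁ f₂ h₁ h₂ ih₁ ih₂ => simp only [Pi.add_apply, ih₁, ih₂]; abel

theorem isOp_map_zero {f : D → D} (hf : IsOp E f) : f 0 = 0 := by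
  induction hf using AddSubmonoid.closure_induction with
  | mem g hg => obtain ⟨e, he, d, rfl⟩ := hg; simp
  | zero => simp
  | add f₁ f₂ h₁ h₂ ih₁ ih₂ => simp [ih₁, ih₂]

theorem isOp_map_smul (hEcomm : ∀ x ∈ E, ∀ y ∈ E, x * y = y * x)
    {f : D → D} (hf : IsOp E f) {e : D} (he : e ∈ E) (x : D) : f (e * x) = e * f x := by
  induction hf using AddSubmonoid.closure_induction with
  | mem g hg =>
    obtain ⟨e', he', d, rfl⟩ := hg
    have : e' * e = e * e' := hEcomm _ he' _ he
    simp only [← mul_assoc, this]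
  | zero => simp
  | add f₁ f₂ h₁ h₂ ih₁ ih₂ => simp [ih₁, ih₂, mul_add]


/-- If `E` is a maximal commutative inverse-closed subalgebra, it is self-centralizing. -/
theorem mem_of_commutes
    (hEcomm : ∀ x ∈ E, ∀ y ∈ E, x * y = y * x)
    (hEinv : ∀ x ∈ E, x⁻¹ ∈ E)
    (hEmax : ∀ E' : Subalgebra K D, (∀ x ∈ E', ∀ y ∈ E', x * y = y * x) →
      (∀ x ∈ E', x⁻¹ ∈ E') → E ≤ E' → E' = E)
    {x : D} (hx : ∀ e ∈ E, e * x = x * e) : x ∈ E := by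
  set S : Set D := insert x (E : Set D) with hS
  have hScomm : ∀ a ∈ S, ∀ b ∈ S, a * b = b * a := by
    rintro a (rfl | ha) b (rfl | hb)
    · rfl
    · exact (hx b hb).symm
    · exact hx a ha
    · exact hEcomm a ha b hb
  have hSsub : S ⊆ Set.centralizer S := fun a ha b hb => hScomm b hb a ha
  set E' : Subalgebra K D := Subalgebra.centralizer K (Set.centralizer S) with hE'
  have hmemE' : ∀ z, z ∈ E' ↔ ∀ g ∈ Set.centralizer S, g * z = z * g := fun z =>
    Subalgebra.mem_centralizer_iff K
  have hSE' : S ⊆ (E' : Set D) := by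
    intro a ha
    rw [SetLike.mem_coe, hmemE']
    intro g hg
    exact (hg a ha).symm
  have hE'sub : (E' : Set D) ⊆ Set.centralizer S := by
    intro a ha
    intro b hb
    have := Set.centralizer_subset hSsub
    rw [SetLike.mem_coe, hmemE'] at ha
    exact ha b (Set.centralizer_subset hSsub (hSE' hb))
  have hE'comm : ∀ a ∈ E', ∀ b ∈ E', a * b = b * a := by
    intro a ha b hb
    have hb' : b ∈ Set.centralizer S := hE'sub hb
    rw [hmemE'] at ha
    exact (ha b hb').symm
  have hE'inv : ∀ a ∈ E', a⁻¹ ∈ E' := by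
    intro a ha
    rw [hmemE'] at ha ⊢
    intro g hg
    exact Commute.inv_right₀ (ha g hg)
  have hEle : E ≤ E' := fun a ha => hSE' (Set.mem_insert_of_mem _ ha)
  have := hEmax E' hE'comm hE'inv hEle
  rw [← this]
  exact hSE' (Set.mem_insert _ _)

/-- Every operator in `R` can be written using a `K`-basis of `E`. -/
theorem isOp_repr {ι : Type*} [Fintype ι] (b : Module.Basis ι K E) {f : D → D} (hf : IsOp E f) :
    ∃ d : ι → D, ∀ x, f x = ∑ t, (b t : D) * x * d t := by
  induction hf using AddSubmonoid.closure_induction with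
  | mem g hg =>
    obtain ⟨e, he, d, rfl⟩ := hg
    refine ⟨fun t => (b.repr ⟨e, he⟩ t) • d, fun x => ?_⟩
    have he' : e = ∑ t, (b.repr ⟨e, he⟩ t) • (b t : D) := by
      calc e = ((⟨e, he⟩ : E) : D) := rfl
        _ = ((∑ t, (b.repr ⟨e, he⟩ t) • b t : E) : D) := by rw [b.sum_repr]
        _ = ∑ t, (b.repr ⟨e, he⟩ t) • (b t : D) := by
            rw [AddSubmonoidClass.coe_finset_sum]
            exact Finset.sum_congr rfl fun t _ => by rw [SetLike.val_smul]
    calc e * x * d = (∑ t, (b.repr ⟨e, he⟩ t) • (b t : D)) * x * d := by rw [← he']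
      _ = ∑ t, ((b.repr ⟨e, he⟩ t) • (b t : D)) * x * d := by
          rw [Finset.sum_mul, Finset.sum_mul]
      _ = ∑ t, (b t : D) * x * ((b.repr ⟨e, he⟩ t) • d) := by
          refine Finset.sum_congr rfl fun t _ => ?_
          rw [smul_mul_assoc, smul_mul_assoc, mul_smul_comm]
  | zero => exact ⟨0, fun x => by simp⟩
  | add f₁ f₂ h₁ h₂ ih₁ ih₂ =>
    obtain ⟨d₁, hd₁⟩ := ih₁
    obtain ⟨d₂, hd₂⟩ := ih₂
    refine ⟨d₁ + d₂, fun x => ?_⟩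
    simp [hd₁, hd₂, mul_add, Finset.sum_add_distrib]

theorem stepA (hEcomm : ∀ x ∈ E, ∀ y ∈ E, x * y = y * x)
    (hc : ∀ x : D, (∀ e ∈ E, e * x = x * e) → x ∈ E) {m : ℕ}
    (ih : ∀ (x : Fin m → D), LinearIndependent E x → ∀ y : Fin m → D,
      ∃ f, IsOp E f ∧ ∀ i, f (x i) = y i)
    (x : Fin (m+1) → D) (hx : LinearIndependent E x) (w : D) :
    ∃ f, IsOp E f ∧ (∀ j : Fin m, f (x j.castSucc) = 0) ∧ f (x (Fin.last m)) = w := by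
  rcases eq_or_ne w 0 with rfl | hw
  · exact ⟨0, isOp_zero, fun j => rfl, rfl⟩
  by_contra hcon
  push_neg at hcon
  have H : ∀ f, IsOp E f → (∀ j : Fin m, f (x j.castSucc) = 0) → f (x (Fin.last m)) = 0 := by
    intro f hf hzero
    by_contra hz
    have h2 := isOp_outer hf E.one_mem ((f (x (Fin.last m)))⁻¹ * w)
    simp only [one_mul] at h2
    exact hcon _ h2 (fun j => by rw [hzero j, zero_mul])
      (by rw [← mul_assoc, mul_inv_cancel₀ hz, one_mul])
  have WD : ∀ f g, IsOp E f → IsOp E g → (∀ j : Fin m, f (x j.castSucc) = g (x j.castSucc)) →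
      f (x (Fin.last m)) = g (x (Fin.last m)) := by
    intro f g hf hg hfg
    have h1 : IsOp E (f + -g) := isOp_add hf (isOp_neg hg)
    have h2 := H _ h1 (fun j => by simp [hfg j])
    have h3 : f (x (Fin.last m)) + -(g (x (Fin.last m))) = 0 := h2
    exact eq_of_sub_eq_zero (by rw [sub_eq_add_neg]; exact h3)
  have hx' : LinearIndependent E (x ∘ Fin.castSucc) := hx.comp _ (Fin.castSucc_injective m)
  have hg : ∀ t : Fin m, ∃ g, IsOp E g ∧ ∀ s : Fin m, g (x s.castSucc) = if s = t then 1 else 0 :=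
    fun t => ih _ hx' (fun s => if s = t then 1 else 0)
  choose g hgop hgval using hg
  set c : Fin m → D := fun t => g t (x (Fin.last m)) with hcdef
  have hcE : ∀ t, c t ∈ E := by
    intro t
    apply hc
    intro e he
    have hf₁ : IsOp E (fun z => e * g t z) := by
      have := isOp_outer (hgop t) he 1; simpa using this
    have hf₂ : IsOp E (fun z => g t z * e) := by
      have := isOp_outer (hgop t) E.one_mem e; simpa using this
    exact WD _ _ hf₁ hf₂ (fun j => by
      rw [hgval t j]; by_cases h : j = t <;> simp [h])
  have key : x (Fin.last m) = ∑ t, c t * x t.castSucc := by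
    have hF : IsOp E (fun z => ∑ t, g t z * x t.castSucc) := by
      have heq : (fun z => ∑ t, g t z * x t.castSucc)
          = ∑ t, (fun z => g t z * x t.castSucc) := by
        funext z; rw [Finset.sum_apply]
      rw [heq]
      refine isOp_sum _ _ fun t _ => ?_
      have := isOp_outer (hgop t) E.one_mem (x t.castSucc); simpa using this
    refine WD _ _ isOp_id hF (fun j => ?_)
    rw [show (∑ t, g t (x j.castSucc) * x t.castSucc)
        = ∑ t, (if j = t then (1:D) else 0) * x t.castSucc from
      Finset.sum_congr rfl fun t _ => by rw [hgval t j]]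
    simp [ite_mul]
  have h1 : (1:E) ≠ 0 := fun h => one_ne_zero (congrArg Subtype.val h : (1:D) = 0)
  set gg : Fin (m+1) → E := Fin.snoc (fun t => ⟨c t, hcE t⟩) (-1) with hgg
  have hsum : ∑ i, gg i • x i = 0 := by
    rw [Fin.sum_univ_castSucc]
    simp only [hgg, Fin.snoc_castSucc, Fin.snoc_last]
    have h2 : ∀ t : Fin m, (⟨c t, hcE t⟩ : E) • x t.castSucc = c t * x t.castSucc :=
      fun t => rfl
    have h3 : ((-1 : E) : D) = -1 := by push_cast; ring
    have h4 : (-1 : E) • x (Fin.last m) = -(x (Fin.last m)) := by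
      show ((-1 : E) : D) * x (Fin.last m) = _
      rw [h3, neg_one_mul]
    rw [h4, Finset.sum_congr rfl fun t _ => h2 t, ← key]
    exact add_neg_cancel _
  have hlast := Fintype.linearIndependent_iff.mp hx gg hsum (Fin.last m)
  rw [hgg, Fin.snoc_last] at hlast
  exact h1 (by rw [← neg_neg (1:E), hlast, neg_zero])

theorem dens (hEcomm : ∀ x ∈ E, ∀ y ∈ E, x * y = y * x)
    (hc : ∀ x : D, (∀ e ∈ E, e * x = x * e) → x ∈ E) :
    ∀ (m : ℕ) (x : Fin m → D), LinearIndependent E x → ∀ y : Fin m → D,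
      ∃ f, IsOp E f ∧ ∀ i, f (x i) = y i := by
  intro m
  induction m with
  | zero => exact fun x _ y => ⟨0, isOp_zero, fun i => i.elim0⟩
  | succ m ih =>
    intro x hx y
    have hdelta : ∀ i₀ : Fin (m+1),
        ∃ f, IsOp E f ∧ f (x i₀) = y i₀ ∧ ∀ j, j ≠ i₀ → f (x j) = 0 := by
      intro i₀
      set σ := Equiv.swap i₀ (Fin.last m) with hσ
      have hxσ : LinearIndependent E (x ∘ σ) := hx.comp _ σ.injective
      obtain ⟨f, hf, hfz, hfl⟩ := stepA hEcomm hc ih (x ∘ σ) hxσ (y i₀)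
      refine ⟨f, hf, ?_, ?_⟩
      · have hσl : x i₀ = (x ∘ σ) (Fin.last m) := by
          simp [hσ, Equiv.swap_apply_right]
        rw [hσl]; exact hfl
      · intro j hj
        have hj' : σ j ≠ Fin.last m := by
          intro h
          apply hj
          have h2 := congrArg σ h
          rw [hσ] at h2
          simpa [Equiv.swap_apply_self, Equiv.swap_apply_right] using h2
        obtain ⟨t, ht⟩ := Fin.exists_castSucc_eq.mpr hj'
        have hxj : x j = (x ∘ σ) t.castSucc := by
          have hστ : σ t.castSucc = j := by
            rw [ht, hσ, Equiv.swap_apply_self]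
          simp [Function.comp, hστ]
        rw [hxj]; exact hfz t
    choose F hFop hFval hFzero using hdelta
    refine ⟨∑ i₀, F i₀, isOp_sum _ _ (fun i _ => hFop i), fun i => ?_⟩
    rw [Finset.sum_apply]
    rw [Finset.sum_eq_single i]
    · exact hFval i
    · intro b _ hb; exact hFzero b i (Ne.symm hb)
    · intro h; exact absurd (Finset.mem_univ i) h

theorem card_le_finrank (hEcomm : ∀ x ∈ E, ∀ y ∈ E, x * y = y * x)
    (hc : ∀ x : D, (∀ e ∈ E, e * x = x * e) → x ∈ E)
    [FiniteDimensional K E]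
    {m : ℕ} (x : Fin m → D) (hx : LinearIndependent E x) :
    m ≤ Module.finrank K E := by
  set n := Module.finrank K E with hn
  let b : Module.Basis (Fin n) K E := Module.finBasis K E
  -- delta operators
  have hf : ∀ i : Fin m, ∃ f, IsOp E f ∧ ∀ j, f (x j) = if j = i then 1 else 0 :=
    fun i => dens hEcomm hc m x hx (fun j => if j = i then 1 else 0)
  choose f hfop hfval using hf
  choose d hd using fun i => isOp_repr b (hfop i)
  -- the vectors (b t * x j)_t are left D-linearly independent in D^n
  set v : Fin m → (Fin n → D) := fun j t => (b t : D) * x j with hv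
  have hvind : LinearIndependent D v := by
    rw [Fintype.linearIndependent_iff]
    intro c hc0 i
    have hct : ∀ t : Fin n, ∑ j, c j * ((b t : D) * x j) = 0 := by
      intro t
      have := congrFun hc0 t
      simpa [v, Finset.sum_apply] using this
    have h1 : ∑ j, c j * f i (x j) = c i := by
      rw [Finset.sum_congr rfl fun j _ => by rw [hfval i j]]
      simp [mul_ite]
    have h2 : ∑ j, c j * f i (x j) = 0 := by
      calc ∑ j, c j * f i (x j) = ∑ j, c j * ∑ t, (b t : D) * x j * d i t := by
            exact Finset.sum_congr rfl fun j _ => by rw [hd i (x j)]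
        _ = ∑ j, ∑ t, c j * ((b t : D) * x j) * d i t := by
            refine Finset.sum_congr rfl fun j _ => ?_
            rw [Finset.mul_sum]
            exact Finset.sum_congr rfl fun t _ => by noncomm_ring
        _ = ∑ t, (∑ j, c j * ((b t : D) * x j)) * d i t := by
            rw [Finset.sum_comm]
            exact Finset.sum_congr rfl fun t _ => by rw [Finset.sum_mul]
        _ = 0 := by
            refine Finset.sum_eq_zero fun t _ => ?_
            rw [hct t, zero_mul]
    rw [← h1, h2]
  have := hvind.fintype_card_le_finrank
  simpa [Module.finrank_fin_fun] using this

end Stmt10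

/-- Let `D` be a division ring with center `K` (realized via an algebra map
`K → D` whose range is exactly the center) and `E` a maximal subfield of `D` (a commutative
subalgebra closed under inverses, maximal among such). If `dim_K E` is finite, then
`dim_E D` and `dim_K D` are finite. -/
theorem stmt_10 (K : Type*) [Field K] (D : Type*) [DivisionRing D] [Algebra K D]
    (hcenter : ∀ x : D, x ∈ Subring.center D ↔ x ∈ (algebraMap K D).range)
    (E : Subalgebra K D)
    (hEcomm : ∀ x ∈ E, ∀ y ∈ E, x * y = y * x)
    (hEinv : ∀ x ∈ E, x⁻¹ ∈ E)
    (hEmax : ∀ E' : Subalgebra K D, (∀ x ∈ E', ∀ y ∈ E', x * y = y * x) →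
      (∀ x ∈ E', x⁻¹ ∈ E') → E ≤ E' → E' = E)
    (hfin : FiniteDimensional K E) :
    Module.Finite E D ∧ FiniteDimensional K D := by
  have hc : ∀ x : D, (∀ e ∈ E, e * x = x * e) → x ∈ E :=
    fun x hx => Stmt10.mem_of_commutes hEcomm hEinv hEmax hx
  -- E is a division ring
  letI : DivisionRing E :=
    { (inferInstance : Ring E) with
      inv := fun e => ⟨(e : D)⁻¹, hEinv e e.2⟩
      mul_inv_cancel := fun a ha => by
        apply Subtype.ext
        have : (a : D) ≠ 0 := fun h => ha (Subtype.ext h)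
        exact mul_inv_cancel₀ this
      inv_zero := Subtype.ext inv_zero
      exists_pair_ne := ⟨0, 1, fun h => (zero_ne_one (α := D)) (congrArg Subtype.val h)⟩
      nnqsmul := _
      qsmul := _ }
  have hED : Module.Finite E D := by
    have hrank : Module.rank E D ≤ (Module.finrank K E : Cardinal) := by
      apply rank_le
      intro s hs
      have hind : LinearIndependent E
          (fun i : Fin s.card => ((s.equivFin.symm i : D))) := by
        have := hs.comp s.equivFin.symm s.equivFin.symm.injective
        exact this
      simpa using Stmt10.card_le_finrank hEcomm hc _ hind
    exact Module.rank_lt_aleph0_iff.mp (hrank.trans_lt (Cardinal.nat_lt_aleph0 _))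
  exact ⟨hED, Module.Finite.trans E D⟩
end

section
/- Let A be an associative algebra over a field F and S a simple A-module such that End_A(S) = F·id. Then for any field extension K/F, the K ⊗_F A-module K ⊗_F S is simple. -/
open TensorProduct

section BaseChangeModule

variable {F : Type*} [Field F] {A : Type*} [Ring A] [Algebra F A]
  {K : Type*} [Field K] [Algebra F K]
  {S : Type*} [AddCommGroup S] [Module A S] [Module F S] [IsScalarTower F A S]

lemma isScalarTower_F_K : IsScalarTower F K (K ⊗[F] S) where
  smul_assoc f k x := by
    induction x using TensorProduct.induction_on with
    | zero =>
        rw [smul_zero, smul_zero]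
        exact (smul_zero f).symm
    | tmul l s => rw [smul_tmul', smul_tmul', smul_tmul', smul_assoc]
    | add x y hx hy => simp only [smul_add, hx, hy]

/-- The action of `A` on `K ⊗[F] S` by `a • (l ⊗ s) = l ⊗ (a • s)`, as an algebra morphism
into the `F`-linear endomorphisms of `K ⊗[F] S`. -/
noncomputable def actionA : A →ₐ[F] Module.End F (K ⊗[F] S) where
  toFun a := LinearMap.lTensor K (Algebra.lsmul F F S a)
  map_one' := by
    show LinearMap.lTensor K ((Algebra.lsmul F F S) 1) = 1
    rw [map_one]
    exact LinearMap.lTensor_id K S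
  map_mul' a b := by
    show LinearMap.lTensor K ((Algebra.lsmul F F S) (a * b)) = _
    rw [map_mul]
    exact LinearMap.lTensor_comp K _ _
  map_zero' := by
    show LinearMap.lTensor K ((Algebra.lsmul F F S) 0) = 0
    rw [map_zero]
    exact LinearMap.lTensor_zero K
  map_add' a b := by
    show LinearMap.lTensor K ((Algebra.lsmul F F S) (a + b)) = _
    rw [map_add]
    exact LinearMap.lTensor_add K _ _
  commutes' f := by
    show LinearMap.lTensor K ((Algebra.lsmul F F S) (algebraMap F A f))
        = algebraMap F (Module.End F (K ⊗[F] S)) f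
    rw [AlgHom.commutes, Module.algebraMap_end_eq_smul_id, Module.algebraMap_end_eq_smul_id,
      LinearMap.lTensor_smul, LinearMap.lTensor_id]

lemma actionA_comm (k : K) (a : A) (x : K ⊗[F] S) :
    k • actionA (F := F) (K := K) a x = actionA (F := F) (K := K) a (k • x) := by
  induction x using TensorProduct.induction_on with
  | zero => simp only [map_zero, smul_zero]
  | tmul l s => rfl
  | add x y hx hy => simp only [map_add, smul_add, hx, hy]

/-- The representation of `K ⊗[F] A` on `K ⊗[F] S` given by
`(k ⊗ a) ↦ (l ⊗ s ↦ (k * l) ⊗ (a • s))`. -/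
noncomputable def baseChangeHom : (K ⊗[F] A) →ₐ[F] Module.End F (K ⊗[F] S) :=
  letI : IsScalarTower F K (K ⊗[F] S) := isScalarTower_F_K
  Algebra.TensorProduct.lift (Algebra.lsmul F F (K ⊗[F] S)) actionA
    (fun k a => show Commute _ _ from LinearMap.ext fun x => actionA_comm k a x)

/-- The natural module structure of `K ⊗[F] A` on `K ⊗[F] S`, with
`(k ⊗ a) • (l ⊗ s) = (k * l) ⊗ (a • s)`. -/
noncomputable def baseChangeModule (F : Type*) [Field F] (A : Type*) [Ring A] [Algebra F A]
    (K : Type*) [Field K] [Algebra F K]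
    (S : Type*) [AddCommGroup S] [Module A S] [Module F S] [IsScalarTower F A S] :
    Module (K ⊗[F] A) (K ⊗[F] S) :=
  Module.compHom _ (baseChangeHom (F := F) (A := A) (K := K) (S := S)).toRingHom

lemma baseChangeModule_smul_tmul (k l : K) (a : A) (s : S) :
    letI := baseChangeModule F A K S
    (k ⊗ₜ[F] a : K ⊗[F] A) • (l ⊗ₜ[F] s : K ⊗[F] S) = (k * l) ⊗ₜ[F] (a • s) := by
  show (baseChangeHom (F := F) (A := A) (K := K) (S := S) (k ⊗ₜ[F] a)) (l ⊗ₜ[F] s)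
      = (k * l) ⊗ₜ[F] (a • s)
  rw [baseChangeHom, Algebra.TensorProduct.lift_tmul]
  rfl

end BaseChangeModule


section Density

variable {F : Type*} [Field F] {A : Type*} [Ring A] [Algebra F A]
  {S : Type*} [AddCommGroup S] [Module A S] [Module F S] [IsScalarTower F A S]
  [IsSimpleModule A S]

/-- Jacobson density, `Fin` version: if `End_A S = F·id` and `s : Fin n → S` is
`F`-linearly independent, then for any targets `t` there is `a : A` with `a • s i = t i`. -/
lemma density_fin (hend : ∀ f : Module.End A S, ∃ c : F, f = c • (LinearMap.id : S →ₗ[A] S)) :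
    ∀ (n : ℕ) (s : Fin n → S), LinearIndependent F s → ∀ t : Fin n → S,
      ∃ a : A, ∀ i, a • s i = t i := by
  intro n
  induction n with
  | zero => exact fun s _ t => ⟨0, fun i => i.elim0⟩
  | succ n ih =>
    have step1 : ∀ (s : Fin (n + 1) → S), LinearIndependent F s → ∀ t : S,
        ∃ a : A, (∀ j : Fin n, a • s j.castSucc = 0) ∧ a • s (Fin.last n) = t := by
      intro s hs t
      set β : A →ₗ[A] S := LinearMap.toSpanSingleton A S (s (Fin.last n)) with hβdef
      set α : A →ₗ[A] (Fin n → S) :=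
        LinearMap.pi (fun j => LinearMap.toSpanSingleton A S (s j.castSucc)) with hαdef
      have hαa : ∀ (a : A) (j : Fin n), α a j = a • s j.castSucc := fun a j => rfl
      have hβa : ∀ a : A, β a = a • s (Fin.last n) := fun a => rfl
      rcases eq_bot_or_eq_top (Submodule.map β (LinearMap.ker α)) with hN | hN
      · exfalso
        have hsurj : Function.Surjective α := by
          intro v
          obtain ⟨a, ha⟩ := ih (fun j => s j.castSucc)
            (hs.comp Fin.castSucc (Fin.castSucc_injective n)) v
          exact ⟨a, funext fun j => ha j⟩
        have hker : ∀ a : A, α a = 0 → β a = 0 := by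
          intro a ha
          have hmem : β a ∈ Submodule.map β (LinearMap.ker α) :=
            Submodule.mem_map_of_mem (by simpa [LinearMap.mem_ker] using ha)
          rw [hN] at hmem
          simpa using hmem
        set ψ : (Fin n → S) → S := fun v => β (Function.surjInv hsurj v) with hψdef
        have key : ∀ (a : A) (v : Fin n → S), α a = v → ψ v = β a := by
          intro a v hv
          have h1 : α (Function.surjInv hsurj v - a) = 0 := by
            rw [map_sub, Function.surjInv_eq hsurj, hv, sub_self]
          have h2 := hker _ h1
          rw [map_sub] at h2
          exact sub_eq_zero.mp h2
        have fdef : ∀ j : Fin n, ∃ c : F, ∀ u : S, ψ (Pi.single j u) = c • u := by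
          intro j
          set f : Module.End A S :=
            { toFun := fun u => ψ (Pi.single j u)
              map_add' := by
                intro u v
                show ψ (Pi.single j (u + v)) = ψ (Pi.single j u) + ψ (Pi.single j v)
                obtain ⟨au, hau⟩ := hsurj (Pi.single j u)
                obtain ⟨av, hav⟩ := hsurj (Pi.single j v)
                rw [key au _ hau, key av _ hav, ← map_add,
                  ← key (au + av) _ (by rw [map_add, hau, hav, ← Pi.single_add])]
              map_smul' := by
                intro a u
                show ψ (Pi.single j (a • u)) = a • ψ (Pi.single j u)
                obtain ⟨au, hau⟩ := hsurj (Pi.single j u)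
                have hsm : α (a * au) = Pi.single j (a • u) := by
                  have : α (a * au) = a • α au := by
                    rw [show a * au = a • au from rfl, map_smul]
                  rw [this, hau]
                  ext m
                  rcases eq_or_ne m j with rfl | hmj
                  · simp
                  · simp [Pi.single_eq_of_ne hmj]
                rw [key au _ hau, key (a * au) _ hsm, hβa, hβa, mul_smul] }
            with hfdef
          obtain ⟨c, hc⟩ := hend f
          refine ⟨c, fun u => ?_⟩
          have := LinearMap.ext_iff.mp hc u
          simpa [hfdef] using this
        choose c hc using fdef
        have ψ0 : ψ 0 = 0 := by rw [key 0 0 (map_zero α), map_zero]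
        have ψadd : ∀ v w, ψ (v + w) = ψ v + ψ w := by
          intro v w
          obtain ⟨av, hv⟩ := hsurj v
          obtain ⟨aw, hw⟩ := hsurj w
          rw [key av v hv, key aw w hw, ← map_add,
            ← key (av + aw) _ (by rw [map_add, hv, hw])]
        set Ψ : (Fin n → S) →+ S := { toFun := ψ, map_zero' := ψ0, map_add' := ψadd }
          with hΨdef
        have hΨa : ∀ v, Ψ v = ψ v := fun v => rfl
        have hlast : s (Fin.last n) = ∑ j : Fin n, c j • s j.castSucc := by
          have h1 : α 1 = fun j => s j.castSucc := funext fun j => one_smul A _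
          have h2 : s (Fin.last n) = ψ (fun j => s j.castSucc) := by
            rw [key 1 _ h1, hβa, one_smul]
          rw [h2, ← hΨa, show (fun (j : Fin n) => s j.castSucc)
              = ∑ j : Fin n, Pi.single j (s j.castSucc)
            from (Finset.univ_sum_single (fun (j : Fin n) => s j.castSucc)).symm,
            map_sum]
          exact Finset.sum_congr rfl fun j _ => by rw [hΨa, hc]
        have hg := Fintype.linearIndependent_iff.mp hs
          ((Fin.snoc (fun j => c j) (-1) : Fin (n + 1) → F))
        have hsum : ∑ i : Fin (n + 1), (Fin.snoc (fun j => c j) (-1) : Fin (n + 1) → F) i • s i = 0 := by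
          rw [Fin.sum_univ_castSucc]
          simp only [Fin.snoc_castSucc, Fin.snoc_last]
          rw [← hlast]
          simp
        have := hg hsum (Fin.last n)
        rw [Fin.snoc_last] at this
        exact one_ne_zero (neg_eq_zero.mp this)
      · have ht : t ∈ Submodule.map β (LinearMap.ker α) := hN ▸ Submodule.mem_top
        obtain ⟨a, ha, hat⟩ := ht
        refine ⟨a, fun j => ?_, hat⟩
        have := congrFun (LinearMap.mem_ker.mp ha) j
        simpa [hαa] using this
    have step2 : ∀ (s : Fin (n + 1) → S), LinearIndependent F s →
        ∀ (i : Fin (n + 1)) (t : S),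
        ∃ a : A, a • s i = t ∧ ∀ m, m ≠ i → a • s m = 0 := by
      intro s hs i t
      obtain ⟨a, h0, hl⟩ := step1 (s ∘ (Equiv.swap i (Fin.last n)))
        (hs.comp _ (Equiv.injective _)) t
      refine ⟨a, ?_, ?_⟩
      · simpa [Equiv.swap_apply_right] using hl
      · intro m hm
        have hm' : Equiv.swap i (Fin.last n) m ≠ Fin.last n := by
          intro h
          apply hm
          have h2 := congrArg (Equiv.swap i (Fin.last n)) h
          rwa [Equiv.swap_apply_self, Equiv.swap_apply_right] at h2
        obtain ⟨j, hj⟩ := Fin.exists_castSucc_eq.mpr hm'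
        have h3 := h0 j
        rw [Function.comp_apply, hj, Equiv.swap_apply_self] at h3
        exact h3
    intro s hs t
    have hstep : ∀ i : Fin (n + 1),
        ∃ a : A, a • s i = t i ∧ ∀ m, m ≠ i → a • s m = 0 :=
      fun i => step2 s hs i (t i)
    choose a ha h0 using hstep
    refine ⟨∑ i, a i, fun m => ?_⟩
    rw [Finset.sum_smul, Finset.sum_eq_single m
      (fun i _ him => h0 i m (Ne.symm him))
      (fun hm => absurd (Finset.mem_univ m) hm)]
    exact ha m

/-- Jacobson density, `Finset` version. -/
lemma density_finset (hend : ∀ f : Module.End A S, ∃ c : F, f = c • (LinearMap.id : S →ₗ[A] S))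
    {ι : Type*} (s : ι → S) (hs : LinearIndependent F s) (σ : Finset ι) (t : ι → S) :
    ∃ a : A, ∀ i ∈ σ, a • s i = t i := by
  obtain ⟨a, ha⟩ := density_fin hend σ.card
    (fun j => s ((σ.equivFin.symm j) : ι))
    (hs.comp (fun j => ((σ.equivFin.symm j) : ι))
      (Subtype.val_injective.comp σ.equivFin.symm.injective))
    (fun j => t ((σ.equivFin.symm j) : ι))
  refine ⟨a, fun i hi => ?_⟩
  have := ha (σ.equivFin ⟨i, hi⟩)
  simpa using this

end Density

/-- Let `A` be an `F`-algebra and `S` a simple `A`-module with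
`End_A S = F · id`. Then for any field extension `K/F`, the `K ⊗[F] A`-module `K ⊗[F] S`
(with the natural action `(k ⊗ a) • (l ⊗ s) = (k l) ⊗ (a s)`) is simple. -/
theorem stmt_12 (F : Type*) [Field F] (A : Type*) [Ring A] [Algebra F A]
    (S : Type*) [AddCommGroup S] [Module A S] [Module F S] [IsScalarTower F A S]
    [IsSimpleModule A S]
    (hend : ∀ f : Module.End A S, ∃ c : F, f = c • (LinearMap.id : S →ₗ[A] S))
    (K : Type*) [Field K] [Algebra F K] :
    letI := baseChangeModule F A K S
    IsSimpleModule (K ⊗[F] A) (K ⊗[F] S) := by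
  classical
  letI := baseChangeModule F A K S
  show IsSimpleModule (K ⊗[F] A) (K ⊗[F] S)
  haveI : Nontrivial S := IsSimpleModule.nontrivial A S
  set b : Module.Basis _ F S := Module.Basis.ofVectorSpace F S with hbdef
  set B := b.baseChange K with hBdef
  haveI hntKS : Nontrivial (K ⊗[F] S) := by
    obtain ⟨j⟩ := b.index_nonempty
    exact ⟨B j, 0, B.ne_zero j⟩
  have hbt : (⊥ : Submodule (K ⊗[F] A) (K ⊗[F] S)) ≠ ⊤ := by
    intro h
    obtain ⟨u, v, huv⟩ := hntKS
    apply huv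
    have hu : u ∈ (⊥ : Submodule (K ⊗[F] A) (K ⊗[F] S)) := h ▸ Submodule.mem_top
    have hv : v ∈ (⊥ : Submodule (K ⊗[F] A) (K ⊗[F] S)) := h ▸ Submodule.mem_top
    rw [Submodule.mem_bot] at hu hv
    rw [hu, hv]
  refine { toNontrivial := ⟨⊥, ⊤, hbt⟩, eq_bot_or_eq_top := fun N => ?_ }
  rcases eq_or_ne N ⊥ with h | h
  · exact Or.inl h
  refine Or.inr ?_
  obtain ⟨x, hxN, hx0⟩ := (Submodule.ne_bot_iff N).mp h
  have hpure : ∀ (k : K) (u : S), k ⊗ₜ[F] u ∈ N := by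
    have hx' : x = (B.repr x).sum fun j kk => kk • B j := by
      conv_lhs => rw [← B.linearCombination_repr x]
      rw [Finsupp.linearCombination_apply]
    obtain ⟨j0, hj0⟩ : ∃ j0, j0 ∈ (B.repr x).support := by
      by_contra hempty
      push_neg at hempty
      apply hx0
      have hz : B.repr x = 0 :=
        Finsupp.ext fun j => Finsupp.notMem_support_iff.mp (hempty j)
      rw [← B.repr.symm_apply_apply x, hz, map_zero]
    set c0 := B.repr x j0 with hc0def
    have hc0 : c0 ≠ 0 := Finsupp.mem_support_iff.mp hj0
    have hstep : ∀ u : S, c0 ⊗ₜ[F] u ∈ N := by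
      intro u
      obtain ⟨a, ha⟩ := density_finset hend (b : _ → S) b.linearIndependent
        (B.repr x).support (fun i => if i = j0 then u else 0)
      have hmem : (1 ⊗ₜ[F] a : K ⊗[F] A) • x ∈ N := N.smul_mem _ hxN
      have hcalc : (1 ⊗ₜ[F] a : K ⊗[F] A) • x = c0 ⊗ₜ[F] u := by
        rw [hx', Finsupp.smul_sum]
        have hterm : ∀ j, (1 ⊗ₜ[F] a : K ⊗[F] A) • ((B.repr x j) • B j)
            = (B.repr x j) ⊗ₜ[F] (a • b j) := by
          intro j
          rw [hBdef, Module.Basis.baseChange_apply, TensorProduct.smul_tmul',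
            smul_eq_mul, mul_one, baseChangeModule_smul_tmul, one_mul]
        rw [Finsupp.sum]
        rw [Finset.sum_congr rfl (fun j _ => hterm j)]
        rw [Finset.sum_eq_single_of_mem j0 hj0
          (fun j hjs hjne => by rw [ha j hjs, if_neg hjne,
            TensorProduct.tmul_zero])]
        rw [ha j0 hj0, if_pos rfl, ← hc0def]
      exact hcalc ▸ hmem
    intro k u
    have h3 : ((k * c0⁻¹) ⊗ₜ[F] (1 : A) : K ⊗[F] A) • (c0 ⊗ₜ[F] u) = k ⊗ₜ[F] u := by
      rw [baseChangeModule_smul_tmul, one_smul, mul_assoc, inv_mul_cancel₀ hc0, mul_one]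
    exact h3 ▸ N.smul_mem _ (hstep u)
  rw [Submodule.eq_top_iff']
  intro z
  induction z using TensorProduct.induction_on with
  | zero => exact N.zero_mem
  | tmul k u => exact hpure k u
  | add y z hy hz => exact N.add_mem hy hz
end

section
/- Let F be a field and let S be a simple module over the polynomial ring F[x₁,…,xₙ]. Then S is finite-dimensional over F. -/
/-- Every simple module over the polynomial ring `F[x₁, …, xₙ]` over a field
`F` is finite-dimensional over `F`. -/
theorem stmt_15 (F : Type*) [Field F] (n : ℕ)
    (S : Type*) [AddCommGroup S] [Module (MvPolynomial (Fin n) F) S] [Module F S]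
    [IsScalarTower F (MvPolynomial (Fin n) F) S]
    [IsSimpleModule (MvPolynomial (Fin n) F) S] :
    FiniteDimensional F S := by
  set R := MvPolynomial (Fin n) F
  obtain ⟨I, hI, ⟨e⟩⟩ := isSimpleModule_iff_quot_maximal.mp
    (inferInstance : IsSimpleModule R S)
  haveI : I.IsMaximal := hI
  haveI : Algebra.FiniteType F (R ⧸ I) :=
    Algebra.FiniteType.trans (inferInstance : Algebra.FiniteType F R)
      inferInstance
  haveI : Algebra.IsIntegral F (R ⧸ I) := by
    rw [Algebra.isIntegral_def]
    have := MvPolynomial.quotient_mk_comp_C_isIntegral_of_isJacobsonRing I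
    intro x
    exact this x
  haveI : Module.Finite F (R ⧸ I) := Algebra.IsIntegral.finite
  exact Module.Finite.equiv (e.restrictScalars F).symm
end

section
/- Let A be an associative algebra over a field F, S a simple A-module such that End_A(S) is a field K (viewed as containing F). If θ ∈ End_A(S) is such that K = F(θ) and θ is transcendental over F, then dim_F(S) ≥ card(F). -/
universe u v

/-- Let `A` be an `F`-algebra and `S` a nonzero simple `A`-module whose
endomorphism ring is a (commutative) field `K = F(θ)` generated over `F` by a single
element `θ` that is transcendental over `F`. Then `dim_F S ≥ card F`. -/
theorem stmt_16 (F : Type u) [Field F] (A : Type*) [Ring A] [Algebra F A]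
    (S : Type v) [AddCommGroup S] [Nontrivial S] [Module A S] [Module F S]
    [IsScalarTower F A S] [IsSimpleModule A S]
    (θ : Module.End A S)
    (hcomm : ∀ f g : Module.End A S, f * g = g * f)
    (hgen : ∀ f : Module.End A S, ∃ p q : Polynomial F,
      Polynomial.aeval θ q ≠ 0 ∧ f * Polynomial.aeval θ q = Polynomial.aeval θ p)
    (htrans : Transcendental F θ) :
    Cardinal.lift.{v} (Cardinal.mk F) ≤ Cardinal.lift.{u} (Module.rank F S) := by
  classical
  letI : Field (Module.End A S) :=
    { (inferInstance : DivisionRing (Module.End A S)) with mul_comm := hcomm }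
  have h1 : LinearIndependent F
      (fun a : F => (θ - algebraMap F (Module.End A S) a)⁻¹) :=
    htrans.linearIndependent_sub_inv
  have h2 := h1.cardinal_lift_le_rank
  refine h2.trans ?_
  -- now compare rank of End with rank of S via evaluation at a nonzero vector
  obtain ⟨s, hs⟩ := exists_ne (0 : S)
  let e : Module.End A S →ₗ[F] S :=
    { toFun := fun f => f s
      map_add' := fun f g => rfl
      map_smul' := fun c f => rfl }
  have hinj : Function.Injective e := by
    intro f g hfg
    by_contra hne
    have h0 : f - g ≠ 0 := sub_ne_zero.2 hne
    have hb := LinearMap.bijective_of_ne_zero h0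
    apply hs
    have : (f - g) s = 0 := by
      simp only [LinearMap.sub_apply, sub_eq_zero]
      exact hfg
    have h00 : (f - g) (0 : S) = 0 := map_zero _
    exact hb.1 (this.trans h00.symm)
  exact Cardinal.lift_le.2 (LinearMap.rank_le_of_injective e hinj)
end

section
/- Let D be a division algebra over a field F such that every element of D is algebraic over F, and suppose D contains a maximal subfield E that is a finitely generated field extension of F. Then D is finite-dimensional over F. -/
open Finset

section Aux

variable {F : Type*} [Field F] {D : Type*} [DivisionRing D] [Algebra F D]

/-- The set of operators of the form `x ↦ ∑ i, d i * x * e i` with `e i ∈ E`. -/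
def OpS (E : Subalgebra F D) : Set (D → D) :=
  {f | ∃ (k : ℕ) (d e : Fin k → D), (∀ i, e i ∈ E) ∧ ∀ x, f x = ∑ i, d i * x * e i}

variable {E : Subalgebra F D}

lemma opS_L (d : D) : (fun x => d * x) ∈ OpS E :=
  ⟨1, fun _ => d, fun _ => 1, fun _ => one_mem E, fun x => by simp⟩

lemma opS_R {e : D} (he : e ∈ E) : (fun x : D => x * e) ∈ OpS E :=
  ⟨1, fun _ => 1, fun _ => e, fun _ => he, fun x => by simp⟩

lemma opS_add {f g : D → D} (hf : f ∈ OpS E) (hg : g ∈ OpS E) :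
    (fun x => f x + g x) ∈ OpS E := by
  obtain ⟨k, d, e, he, hfx⟩ := hf
  obtain ⟨k', d', e', he', hgx⟩ := hg
  refine ⟨k + k', Fin.append d d', Fin.append e e', ?_, fun x => ?_⟩
  · intro i
    exact Fin.addCases (motive := fun i => Fin.append e e' i ∈ E)
      (fun j => by simpa using he j) (fun j => by simpa using he' j) i
  · show f x + g x = _
    rw [hfx, hgx, Fin.sum_univ_add]
    simp

lemma opS_neg {f : D → D} (hf : f ∈ OpS E) : (fun x => -(f x)) ∈ OpS E := by
  obtain ⟨k, d, e, he, hfx⟩ := hf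
  exact ⟨k, fun i => -(d i), e, he, fun x => by simp [hfx, Finset.sum_neg_distrib]⟩

lemma opS_Lcomp (c : D) {f : D → D} (hf : f ∈ OpS E) : (fun x => c * f x) ∈ OpS E := by
  obtain ⟨k, d, e, he, hfx⟩ := hf
  exact ⟨k, fun i => c * d i, e, he, fun x => by
    simp only [hfx, Finset.mul_sum, mul_assoc]⟩

lemma opS_Rcomp {c : D} (hc : c ∈ E) {f : D → D} (hf : f ∈ OpS E) :
    (fun x => f x * c) ∈ OpS E := by
  obtain ⟨k, d, e, he, hfx⟩ := hf
  exact ⟨k, d, fun i => e i * c, fun i => mul_mem (he i) hc, fun x => by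
    simp only [hfx, Finset.sum_mul, mul_assoc]⟩

variable (hEcomm : ∀ x ∈ E, ∀ y ∈ E, x * y = y * x)

include hEcomm in
lemma opS_mulE {f : D → D} (hf : f ∈ OpS E) {c : D} (hc : c ∈ E) (w : D) :
    f (w * c) = f w * c := by
  obtain ⟨k, d, e, he, hfx⟩ := hf
  simp only [hfx, Finset.sum_mul, mul_assoc]
  refine Finset.sum_congr rfl fun i _ => ?_
  rw [hEcomm c hc (e i) (he i)]


include hEcomm in
lemma opS_sum {f : D → D} (hf : f ∈ OpS E) {m : ℕ} (w c : Fin m → D)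
    (hc : ∀ j, c j ∈ E) : f (∑ j, w j * c j) = ∑ j, f (w j) * c j := by
  obtain ⟨k, d, e, he, hfx⟩ := hf
  simp only [hfx, Finset.mul_sum, Finset.sum_mul]
  rw [Finset.sum_comm]
  refine Finset.sum_congr rfl fun j _ => Finset.sum_congr rfl fun i _ => ?_
  have hce : c j * e i = e i * c j := hEcomm (c j) (hc j) (e i) (he i)
  simp only [mul_assoc]
  rw [hce]

/-- Right `E`-span of a finite family. -/
def Sp (E : Subalgebra F D) {m : ℕ} (x : Fin m → D) : Set D :=
  {y | ∃ c : Fin m → D, (∀ i, c i ∈ E) ∧ y = ∑ i, x i * c i}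


lemma opS_sub {f : D → D} (hf : f ∈ OpS E) (a b : D) : f (a - b) = f a - f b := by
  obtain ⟨k, d, e, he, hfx⟩ := hf
  simp only [hfx, ← Finset.sum_sub_distrib]
  refine Finset.sum_congr rfl fun i _ => by rw [mul_sub, sub_mul]

include hEcomm in
lemma opS_density (hC : ∀ c : D, (∀ e ∈ E, e * c = c * e) → c ∈ E) :
    ∀ (m : ℕ) (x : Fin m → D) (y : D), y ∉ Sp E x →
      ∃ f ∈ OpS E, (∀ i, f (x i) = 0) ∧ f y ≠ 0 := by
  intro m
  induction m with
  | zero =>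
    intro x y hy
    refine ⟨_, opS_L 1, fun i => i.elim0, fun h0 => hy ?_⟩
    have hy0 : y = 0 := by simpa using h0
    exact ⟨fun i => i.elim0, fun i => i.elim0, by simp [hy0]⟩
  | succ m ih =>
    intro x y hy
    set x' : Fin m → D := x ∘ Fin.castSucc with hx'
    set z := x (Fin.last m) with hzdef
    have hsub : Sp E x' ⊆ Sp E x := by
      rintro w ⟨c, hc, rfl⟩
      refine ⟨Fin.snoc c 0, ?_, ?_⟩
      · intro i
        refine Fin.lastCases ?_ ?_ i
        · simpa using zero_mem E
        · intro j; simpa using hc j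
      · rw [Fin.sum_univ_castSucc]
        simp only [Fin.snoc_castSucc, Fin.snoc_last, mul_zero, add_zero]
        exact Finset.sum_congr rfl fun i _ => rfl
    have hyx' : y ∉ Sp E x' := fun h => hy (hsub h)
    by_cases hz : z ∈ Sp E x'
    · obtain ⟨f, hfS, hfx', hfy⟩ := ih x' y hyx'
      refine ⟨f, hfS, ?_, hfy⟩
      intro i
      refine Fin.lastCases ?_ (fun j => hfx' j) i
      obtain ⟨c, hc, hzc⟩ := hz
      show f (x (Fin.last m)) = 0
      rw [← hzdef, hzc, opS_sum hEcomm hfS x' c hc]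
      simp [hfx']
    · by_contra hcon
      push_neg at hcon
      obtain ⟨f₀, hf₀S, hf₀x', hf₀z⟩ := ih x' z hz
      set f₁ : D → D := fun w => (f₀ z)⁻¹ * f₀ w with hf₁
      have hf₁S : f₁ ∈ OpS E := opS_Lcomp _ hf₀S
      have hf₁x' : ∀ j, f₁ (x' j) = 0 := fun j => by simp [hf₁, hf₀x' j]
      have hf₁z : f₁ z = 1 := inv_mul_cancel₀ hf₀z
      set c := f₁ y with hcdef
      have key : ∀ f ∈ OpS E, (∀ j, f (x' j) = 0) → f y = f z * c := by
        intro f hfS hfx'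
        set g : D → D := fun w => f w + -(f z * f₁ w) with hg
        have hgS : g ∈ OpS E := opS_add hfS (opS_neg (opS_Lcomp (f z) hf₁S))
        have hgx : ∀ i, g (x i) = 0 := by
          intro i
          refine Fin.lastCases ?_ ?_ i
          · show f (x (Fin.last m)) + -(f z * f₁ (x (Fin.last m))) = 0
            rw [← hzdef, hf₁z, mul_one, add_neg_cancel]
          · intro j
            show f (x (Fin.castSucc j)) + -(f z * f₁ (x (Fin.castSucc j))) = 0
            have h1 : x (Fin.castSucc j) = x' j := rfl
            rw [h1, hfx' j, hf₁x' j, mul_zero, neg_zero, add_zero]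
        have hgy := hcon g hgS hgx
        have : f y + -(f z * c) = 0 := hgy
        rwa [← sub_eq_add_neg, sub_eq_zero] at this
      have hcE : c ∈ E := by
        refine hC c fun e heE => ?_
        have h1 := key _ (opS_Rcomp heE hf₁S)
          (fun j => by simp [hf₁x' j])
        simp only [hf₁z, one_mul, ← hcdef] at h1
        exact h1.symm
      have hmem : y - z * c ∈ Sp E x' := by
        by_contra hns
        obtain ⟨f, hfS, hfx', hfne⟩ := ih x' (y - z * c) hns
        have h2 := key f hfS hfx'
        exact hfne (by rw [opS_sub hfS, opS_mulE hEcomm hfS hcE, h2, sub_self])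
      obtain ⟨cc, hccE, hyc⟩ := hmem
      refine hy ⟨Fin.snoc cc c, ?_, ?_⟩
      · intro i
        refine Fin.lastCases ?_ ?_ i
        · simpa using hcE
        · intro j; simpa using hccE j
      · rw [Fin.sum_univ_castSucc]
        simp only [Fin.snoc_castSucc, Fin.snoc_last]
        rw [show (∑ j, x (Fin.castSucc j) * cc j) = y - z * c from hyc.symm]
        rw [← hzdef]
        simp


lemma opS_form {n : ℕ} (e : Fin n → D)
    (hrep : ∀ c ∈ E, ∃ a : Fin n → F, c = ∑ j, a j • e j)
    {f : D → D} (hf : f ∈ OpS E) : ∃ d : Fin n → D, ∀ x, f x = ∑ j, d j * x * e j := by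
  obtain ⟨k, d, ee, hee, hfx⟩ := hf
  choose a ha using fun i => hrep (ee i) (hee i)
  refine ⟨fun j => ∑ i, a i j • d i, fun x => ?_⟩
  rw [hfx]
  calc ∑ i, d i * x * ee i
      = ∑ i, ∑ j, a i j • (d i * x * e j) := by
        refine Finset.sum_congr rfl fun i _ => ?_
        rw [ha i, Finset.mul_sum]
        exact Finset.sum_congr rfl fun j _ => by rw [mul_smul_comm]
    _ = ∑ j, ∑ i, a i j • (d i * x * e j) := Finset.sum_comm
    _ = ∑ j, (∑ i, a i j • d i) * x * e j := by
        refine Finset.sum_congr rfl fun j _ => ?_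
        rw [Finset.sum_mul, Finset.sum_mul]
        exact Finset.sum_congr rfl fun i _ => by rw [smul_mul_assoc, smul_mul_assoc]

lemma dual_card_le {n m : ℕ} (e : Fin n → D)
    (hrep : ∀ c ∈ E, ∃ a : Fin n → F, c = ∑ j, a j • e j)
    (x : Fin m → D)
    (hdual : ∀ i, ∃ f ∈ OpS E, ∀ j, f (x j) = if j = i then 1 else 0) : m ≤ n := by
  let Φ : (Fin n → D) →ₗ[D] (Fin m → D) :=
    { toFun := fun d => fun l => ∑ j, d j * (x l * e j)
      map_add' := by
        intro a b; funext l
        simp [add_mul, Finset.sum_add_distrib]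
      map_smul' := by
        intro c a; funext l
        simp only [Pi.smul_apply, smul_eq_mul, RingHom.id_apply]
        rw [Finset.mul_sum]
        exact Finset.sum_congr rfl fun j _ => (mul_assoc _ _ _) }
  have hsingle : ∀ i, Pi.single i (1 : D) ∈ LinearMap.range Φ := by
    intro i
    obtain ⟨f, hfS, hfx⟩ := hdual i
    obtain ⟨d, hd⟩ := opS_form e hrep hfS
    refine ⟨d, funext fun l => ?_⟩
    have h0 : Φ d l = ∑ j, d j * (x l * e j) := rfl
    rw [h0]
    have h1 : ∑ j, d j * (x l * e j) = f (x l) := by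
      rw [hd (x l)]
      exact Finset.sum_congr rfl fun j _ => (mul_assoc _ _ _).symm
    rw [h1, hfx l, Pi.single_apply]
  have hsurj : Function.Surjective Φ := by
    rw [← LinearMap.range_eq_top, Submodule.eq_top_iff']
    intro v
    have hv : v = ∑ l, v l • (Pi.single l 1 : Fin m → D) := by
      funext l'
      simp [Pi.single_apply]
    rw [hv]
    exact Submodule.sum_mem _ fun l _ => Submodule.smul_mem _ _ (hsingle l)
  have hrank := LinearMap.rank_le_of_surjective Φ hsurj
  rw [rank_fin_fun, rank_fin_fun] at hrank
  exact_mod_cast hrank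

end Aux


/-- Let `D` be a division algebra over a field `F` such that every element of
`D` is algebraic over `F`, and suppose `D` contains a maximal subfield `E` (a commutative,
inverse-closed subalgebra, maximal among such) which is a finitely generated field
extension of `F` (it is the smallest inverse-closed subalgebra containing some finite set).
Then `D` is finite-dimensional over `F`. -/
theorem stmt_18 (F : Type*) [Field F] (D : Type*) [DivisionRing D] [Algebra F D]
    (halg : ∀ d : D, IsAlgebraic F d)
    (E : Subalgebra F D)
    (hEcomm : ∀ x ∈ E, ∀ y ∈ E, x * y = y * x)
    (hEinv : ∀ x ∈ E, x⁻¹ ∈ E)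
    (hEmax : ∀ E' : Subalgebra F D, (∀ x ∈ E', ∀ y ∈ E', x * y = y * x) →
      (∀ x ∈ E', x⁻¹ ∈ E') → E ≤ E' → E' = E)
    (hfg : ∃ s : Finset D, ↑s ⊆ (E : Set D) ∧
      ∀ E' : Subalgebra F D, (∀ x ∈ E', x⁻¹ ∈ E') → ↑s ⊆ (E' : Set D) → E ≤ E') :
    FiniteDimensional F D := by
  classical
  obtain ⟨s, hsE, hsmin⟩ := hfg
  have hadj_inv : ∀ E' : Subalgebra F D, ∀ x ∈ E', x⁻¹ ∈ E' :=
    fun E' x hx => ((halg x).isIntegral).inv_mem hx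
  have hEeq : Algebra.adjoin F (↑s : Set D) = E :=
    le_antisymm (Algebra.adjoin_le hsE) (hsmin _ (hadj_inv _) Algebra.subset_adjoin)
  -- centralizer of E is E
  have hC : ∀ c : D, (∀ e ∈ E, e * c = c * e) → c ∈ E := by
    intro c hc
    set E' := Algebra.adjoin F (insert c (E : Set D)) with hE'
    have hcomm' : ∀ a ∈ insert c (E : Set D), ∀ b ∈ insert c (E : Set D), a * b = b * a := by
      rintro a ha b hb
      rcases Set.mem_insert_iff.mp ha with rfl | haE <;>
        rcases Set.mem_insert_iff.mp hb with rfl | hbE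
      · rfl
      · exact (hc b hbE).symm
      · exact hc a haE
      · exact hEcomm a haE b hbE
    have hcommE' : ∀ p ∈ E', ∀ q ∈ E', p * q = q * p := by
      intro p hp q hq
      have h2 : ∀ z ∈ insert c (E : Set D), Commute p z := fun z hz =>
        (Algebra.commute_of_mem_adjoin_of_forall_mem_commute hp
          (fun w hw => hcomm' z hz w hw)).symm
      exact Algebra.commute_of_mem_adjoin_of_forall_mem_commute hq h2
    have hle : E ≤ E' := fun w hw => Algebra.subset_adjoin (Set.mem_insert_of_mem _ hw)
    have hEE' := hEmax E' hcommE' (hadj_inv E') hle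
    exact hEE' ▸ Algebra.subset_adjoin (Set.mem_insert _ _)
  -- E is a finite F-module
  letI : CommRing E := { (inferInstance : Ring E) with
    mul_comm := fun a b => Subtype.ext (hEcomm _ a.2 _ b.2) }
  have hfinE : Module.Finite F E := by
    set s'' : Set E := (Subtype.val : E → D) ⁻¹' ↑s with hs''
    have hfin : s''.Finite := s.finite_toSet.preimage Subtype.val_injective.injOn
    have hint : ∀ x ∈ s'', IsIntegral F x := fun x _ =>
      (isIntegral_algHom_iff E.val Subtype.val_injective).mp (halg (x : D)).isIntegral
    have h1 : Subalgebra.toSubmodule (Algebra.adjoin F s'') |>.FG := fg_adjoin_of_finite hfin hint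
    have h2 : Algebra.adjoin F s'' = (⊤ : Subalgebra F E) := by
      apply Subalgebra.map_injective (f := E.val) Subtype.val_injective
      rw [AlgHom.map_adjoin, Algebra.map_top, Subalgebra.range_val]
      have himg : E.val '' s'' = ↑s := by
        have : E.val '' s'' = Subtype.val '' ((Subtype.val : E → D) ⁻¹' ↑s) := rfl
        rw [this, Set.image_preimage_eq_inter_range, Subtype.range_val]
        exact Set.inter_eq_left.mpr hsE
      rw [himg, hEeq]
    exact ⟨by rw [← Algebra.top_toSubmodule, ← h2]; exact h1⟩
  obtain ⟨n, b, hb⟩ := Module.Finite.exists_fin (R := F) (M := E)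
  set e : Fin n → D := fun j => (b j : D) with he
  have heE : ∀ j, e j ∈ E := fun j => (b j).2
  have hrep : ∀ c ∈ E, ∃ a : Fin n → F, c = ∑ j, a j • e j := by
    intro c hc
    have hmem : (⟨c, hc⟩ : E) ∈ Submodule.span F (Set.range b) := hb ▸ Submodule.mem_top
    rw [Submodule.mem_span_range_iff_exists_fun] at hmem
    obtain ⟨a, ha⟩ := hmem
    refine ⟨a, ?_⟩
    have := congrArg (Subtype.val : E → D) ha
    simp only [AddSubmonoidClass.coe_finset_sum, SetLike.val_smul] at this
    exact this.symm
  -- dual families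
  let Dual : ∀ m, (Fin m → D) → Prop := fun m x =>
    ∀ i, ∃ f ∈ OpS E, ∀ j, f (x j) = if j = i then 1 else 0
  have hbound : ∀ m (x : Fin m → D), Dual m x → m ≤ n :=
    fun m x h => dual_card_le e hrep x h
  have hP0 : ∃ x : Fin 0 → D, Dual 0 x := ⟨fun i => i.elim0, fun i => i.elim0⟩
  have hext : ∀ m (x : Fin m → D), Dual m x → ∀ y, y ∉ Sp E x →
      Dual (m + 1) (Fin.snoc x y) := by
    intro m x hx y hy
    obtain ⟨g, hgS, hgx, hgy⟩ := opS_density hEcomm hC m x y hy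
    set g1 : D → D := fun w => (g y)⁻¹ * g w with hg1
    have hg1S : g1 ∈ OpS E := opS_Lcomp _ hgS
    have hg1x : ∀ j, g1 (x j) = 0 := fun j => by simp [hg1, hgx j]
    have hg1y : g1 y = 1 := inv_mul_cancel₀ hgy
    intro i
    refine Fin.lastCases ?_ ?_ i
    · refine ⟨g1, hg1S, fun j => ?_⟩
      refine Fin.lastCases ?_ ?_ j
      · simp [hg1y]
      · intro j'
        simp [Fin.ne_of_lt (Fin.castSucc_lt_last j'), hg1x j']
    · intro i'
      obtain ⟨f, hfS, hfx⟩ := hx i'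
      refine ⟨fun w => f w + -(f y * g1 w),
        opS_add hfS (opS_neg (opS_Lcomp (f y) hg1S)), fun j => ?_⟩
      refine Fin.lastCases ?_ ?_ j
      · simp [hg1y, Fin.ne_of_gt (Fin.castSucc_lt_last i')]
      · intro j'
        simp [hfx j', hg1x j', Fin.castSucc_inj]
  have hnot : ¬ ∃ x : Fin (n + 1) → D, Dual (n + 1) x :=
    fun ⟨x, hx⟩ => absurd (hbound _ x hx) (by omega)
  have hex : ∃ m : ℕ, ¬ ∃ x : Fin m → D, Dual m x := ⟨n + 1, hnot⟩
  have hk := Nat.find_spec hex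
  have hkpos : Nat.find hex ≠ 0 := fun h => (h ▸ hk) hP0
  obtain ⟨m, hkm⟩ : ∃ m, Nat.find hex = m + 1 :=
    ⟨Nat.find hex - 1, (Nat.succ_pred_eq_of_pos (Nat.pos_of_ne_zero hkpos)).symm⟩
  have hm : ∃ x : Fin m → D, Dual m x := by
    by_contra h
    exact Nat.find_min hex (by omega) h
  obtain ⟨x, hx⟩ := hm
  have hspanall : ∀ y, y ∈ Sp E x := by
    intro y; by_contra hy
    exact (hkm ▸ hk) ⟨Fin.snoc x y, hext m x hx y hy⟩
  have htop : Submodule.span F (Set.range (fun p : Fin m × Fin n => x p.1 * e p.2)) = ⊤ := by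
    rw [Submodule.eq_top_iff']
    intro y
    obtain ⟨c, hcE, hyc⟩ := hspanall y
    rw [hyc]
    refine Submodule.sum_mem _ fun i _ => ?_
    obtain ⟨a, ha⟩ := hrep (c i) (hcE i)
    rw [ha, Finset.mul_sum]
    refine Submodule.sum_mem _ fun j _ => ?_
    rw [mul_smul_comm]
    exact Submodule.smul_mem _ _ (Submodule.subset_span ⟨(i, j), rfl⟩)
  exact ⟨by rw [← htop]; exact Submodule.fg_span (Set.finite_range _)⟩
end

section
/- Let F be a field, A a commutative F-algebra generated as an algebra by finitely many elements, and S a simple A-module. Then every element of End_A(S) is algebraic over F and End_A(S) is finite-dimensional over F. -/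
/-- Let `A` be a finitely generated commutative algebra over a field `F` and
`S` a simple `A`-module. Then every element of `End_A S` is algebraic over `F`, and
`End_A S` is finite-dimensional over `F`. -/
theorem stmt_19 (F : Type*) [Field F] (A : Type*) [CommRing A] [Algebra F A]
    (hfg : Algebra.FiniteType F A)
    (S : Type*) [AddCommGroup S] [Module A S] [Module F S] [IsScalarTower F A S]
    [IsSimpleModule A S] :
    (∀ f : Module.End A S, IsAlgebraic F f) ∧ FiniteDimensional F (Module.End A S) := by
  classical
  -- the algebra map `A → End_A S`, `a ↦ (a • ·)`, is surjective since `S` is simple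
  set φ : A →ₐ[F] Module.End A S := Algebra.lsmul F A S with hφ
  have hsurj : Function.Surjective φ := by
    intro f
    haveI : Nontrivial S := IsSimpleModule.nontrivial A S
    obtain ⟨x, hx⟩ := exists_ne (0 : S)
    have hspan : Submodule.span A {x} = ⊤ := by
      rcases (eq_bot_or_eq_top (Submodule.span A {x} : Submodule A S)) with h | h
      · exfalso; exact hx (by simpa [h] using Submodule.mem_span_singleton_self (R := A) x)
      · exact h
    have hfx : f x ∈ Submodule.span A {x} := by rw [hspan]; trivial
    obtain ⟨a, ha⟩ := Submodule.mem_span_singleton.mp hfx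
    refine ⟨a, ?_⟩
    ext y
    have hy : y ∈ Submodule.span A {x} := by rw [hspan]; trivial
    obtain ⟨b, hb⟩ := Submodule.mem_span_singleton.mp hy
    subst hb
    simp [φ, ← ha, smul_comm a b, map_smul]
  -- hence `End_A S` is commutative; by Schur's lemma it is a division ring, so a field
  have hcomm : ∀ f g : Module.End A S, f * g = g * f := by
    intro f g
    obtain ⟨a, rfl⟩ := hsurj f
    obtain ⟨b, rfl⟩ := hsurj g
    rw [← map_mul, ← map_mul, mul_comm]
  letI : DivisionRing (Module.End A S) := Module.End.instDivisionRing
  letI : Field (Module.End A S) := { (inferInstance : DivisionRing (Module.End A S)) with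
    mul_comm := hcomm }
  -- it is a finite type `F`-algebra, so by Zariski's lemma it is finite over `F`
  haveI : Algebra.FiniteType F (Module.End A S) := hfg.of_surjective φ hsurj
  haveI : Module.Finite F (Module.End A S) :=
    finite_of_finite_type_of_isJacobsonRing F (Module.End A S)
  refine ⟨fun f => ?_, inferInstance⟩
  exact (Algebra.IsAlgebraic.of_finite F (Module.End A S)).isAlgebraic f
end
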